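/- For every n ≥ 1 and every x = (x_1,…,x_n) ∈ ℝⁿ, ‖x‖₂ − ‖x‖₁/√n ≤ (√n/4)·( max_{1≤i≤n} |x_i| − min_{1≤i≤n} |x_i| ). -/

import Mathlib

/-- **Lemma 7 (shifting inequality).** For every `x ∈ ℝⁿ`,
`‖x‖₂ - ‖x‖₁/√n ≤ (√n/4) (maxᵢ |xᵢ| - minᵢ |xᵢ|)`. -/
theorem l2_l1_spread_bound (n : ℕ) (hn : 1 ≤ n) (x : Fin n → ℝ) :
    Real.sqrt (∑ i, (x i) ^ 2) - (∑ i, |x i|) / Real.sqrt n ≤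
      Real.sqrt n / 4 * ((⨆ i, |x i|) - ⨅ i, |x i|) := by
  haveI : Nonempty (Fin n) := ⟨⟨0, hn⟩⟩
  set M := ⨆ i, |x i| with hMdef
  set m := ⨅ i, |x i| with hmdef
  set T := ∑ i, (x i) ^ 2 with hTdef
  set S := ∑ i, |x i| with hSdef
  have hM : ∀ i, |x i| ≤ M := fun i => le_ciSup (f := fun i => |x i|) (Set.Finite.bddAbove (Set.finite_range _)) i
  have hm : ∀ i, m ≤ |x i| := fun i => ciInf_le (f := fun i => |x i|) (Set.Finite.bddBelow (Set.finite_range _)) i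
  have hm0 : 0 ≤ m := le_ciInf (f := fun i => |x i|) fun i => abs_nonneg _
  have hmM : m ≤ M := le_trans (hm ⟨0, hn⟩) (hM ⟨0, hn⟩)
  set s := Real.sqrt n with hsdef
  have hspos : 0 < s := Real.sqrt_pos.mpr (by exact_mod_cast Nat.pos_of_ne_zero (by omega))
  have hs2 : s * s = n := Real.mul_self_sqrt (Nat.cast_nonneg n)
  have hT0 : 0 ≤ T := Finset.sum_nonneg fun i _ => sq_nonneg _
  have hS0 : 0 ≤ S := Finset.sum_nonneg fun i _ => abs_nonneg _
  have key : T ≤ (M + m) * S - n * m * M := by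
    have : ∀ i ∈ Finset.univ, (x i) ^ 2 ≤ (M + m) * |x i| - m * M := by
      intro i _
      have h1 := hM i
      have h2 := hm i
      nlinarith [sq_abs (x i)]
    calc T ≤ ∑ i, ((M + m) * |x i| - m * M) := Finset.sum_le_sum this
      _ = (M + m) * S - n * m * M := by
          rw [Finset.sum_sub_distrib, ← Finset.mul_sum, Finset.sum_const]
          simp [hSdef]; ring
  rcases eq_or_lt_of_le (by linarith : (0:ℝ) ≤ M + m) with h0 | hMm
  · -- M + m = 0 : all coordinates vanish
    have hMz : M = 0 := by linarith
    have hmz : m = 0 := by linarith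
    have hx : ∀ i, x i = 0 := fun i => abs_eq_zero.mp (le_antisymm (hMz ▸ hM i) (abs_nonneg _))
    have hT : T = 0 := by simp [hTdef, hx]
    have hS : S = 0 := by simp [hSdef, hx]
    rw [hT, hS, hMz, hmz]
    simp
  · have hc : 0 < s * (M + m) := mul_pos hspos hMm
    have hsq : Real.sqrt T * Real.sqrt T = T := Real.mul_self_sqrt hT0
    have h1 : Real.sqrt T * (s * (M + m)) ≤ T + (s * (M + m) / 2) ^ 2 := by
      nlinarith [sq_nonneg (Real.sqrt T - s * (M + m) / 2)]
    have hn' : (n : ℝ) = s * s := hs2.symm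
    have hX : (S / s + s / 4 * (M - m)) * (s * (M + m)) =
        (M + m) * S + (s * s) * (M + m) * (M - m) / 4 := by
      field_simp
    have h2 : Real.sqrt T * (s * (M + m)) ≤ (S / s + s / 4 * (M - m)) * (s * (M + m)) := by
      rw [hX]
      have h3 : T + (s * (M + m) / 2) ^ 2 ≤ (M + m) * S + (s * s) * (M + m) * (M - m) / 4 := by
        rw [hn'] at key
        nlinarith [mul_nonneg hm0 (by linarith : (0:ℝ) ≤ M - m), sq_nonneg s]
      linarith
    have hfin : Real.sqrt T ≤ S / s + s / 4 * (M - m) :=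
      le_of_mul_le_mul_right (by linarith [h2]) hc
    linarith
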